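/- Let n ≥ 1 be an integer and let A be meromorphic in a neighborhood of 0 with Laurent expansion A(z) = b₀/z² + b₁/z + b₂ + ⋯ where b₀ = (1-(n+1)²)/4. Suppose the Briot–Bouquet equation z ω'(z) = -(n+1) ω(z) + ω(z)² + A(z) z² - (1-(n+1)²)/4 has a holomorphic solution ω near 0 with ω(0) = 0 (which holds since -(n+1) is not a positive integer). Then v₁(z) = (-(n+2)/2 + ω(z))/z is a meromorphic solution near 0 of the Riccati equation v' - v² = A(z), with a simple pole at 0 of residue -(n+2)/2. -/

import Mathlib

open Complex

/-- If `A` is meromorphic near `0` with Laurent expansion `A(z) = b₀/z² + b₁/z + ⋯`,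
`b₀ = (1-(n+1)²)/4`, and the Briot–Bouquet equation
`z ω' = -(n+1)ω + ω² + A z² - b₀` has a holomorphic solution `ω` with `ω(0) = 0`, then
`v₁(z) = (-(n+2)/2 + ω(z))/z` is a meromorphic solution near `0` of the Riccati equation
`v' - v² = A`, with a simple pole at `0` of residue `-(n+2)/2`. -/
theorem briot_bouquet_gives_riccati_solution
    (n : ℕ) (hn : 1 ≤ n) (U : Set ℂ) (hU : IsOpen U) (h0 : (0:ℂ) ∈ U)
    (A C : ℂ → ℂ) (hC : DifferentiableOn ℂ C U)
    (hA : ∀ z ∈ U, z ≠ 0 →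
      A z = ((1 - ((n : ℂ) + 1)^2) / 4) / z^2 + C z / z)
    (ω : ℂ → ℂ) (hω : DifferentiableOn ℂ ω U) (hω0 : ω 0 = 0)
    (hBB : ∀ z ∈ U, z ≠ 0 →
      z * deriv ω z = -((n : ℂ) + 1) * ω z + (ω z)^2 + A z * z^2
        - (1 - ((n : ℂ) + 1)^2) / 4)
    (v₁ : ℂ → ℂ) (hv₁ : ∀ z, v₁ z = (-(((n : ℂ) + 2) / 2) + ω z) / z) :
    (∀ z ∈ U, z ≠ 0 → deriv v₁ z - (v₁ z)^2 = A z) ∧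
    Filter.Tendsto (fun z => z * v₁ z) (nhdsWithin 0 {(0:ℂ)}ᶜ)
      (nhds (-(((n : ℂ) + 2) / 2))) := by
  have hfun : v₁ = fun z => (-(((n : ℂ) + 2) / 2) + ω z) / z := funext hv₁
  constructor
  · intro z hz hz0
    have hωd : DifferentiableAt ℂ ω z := hω.differentiableAt (hU.mem_nhds hz)
    have hd1 : DifferentiableAt ℂ (fun w => (-(((n : ℂ) + 2) / 2) + ω w)) z :=
      (differentiableAt_const _).add hωd
    have hderiv : deriv v₁ z =
        (deriv ω z * z - (-(((n : ℂ) + 2) / 2) + ω z) * 1) / z ^ 2 := by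
      rw [hfun, deriv_fun_div hd1 differentiableAt_fun_id hz0, deriv_const_add, deriv_id'']
    have key := hBB z hz hz0
    rw [hderiv, hv₁ z]
    field_simp
    linear_combination 4 * key
  · have hωc : ContinuousAt ω 0 := (hω.differentiableAt (hU.mem_nhds h0)).continuousAt
    have h1 : Filter.Tendsto (fun z => -(((n : ℂ) + 2) / 2) + ω z)
        (nhdsWithin 0 {(0:ℂ)}ᶜ) (nhds (-(((n : ℂ) + 2) / 2))) := by
      have := (hωc.tendsto.mono_left (nhdsWithin_le_nhds (s := {(0:ℂ)}ᶜ))).const_add (-(((n : ℂ) + 2) / 2))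
      simpa [hω0] using this
    refine h1.congr' ?_
    filter_upwards [self_mem_nhdsWithin] with z hz
    have hz0 : z ≠ 0 := hz
    rw [hv₁ z]
    field_simp
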